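/- Let D be the set of non-increasing right-continuous functions U : ℝ → [0,1] with lim_{x→−∞} U(x) = 1 and lim_{x→+∞} U(x) = 0. For U, V ∈ D say U is more stretched than V, written U ≥_s V, if for every c ∈ ℝ and every x₁ ≤ x₂: U(x₁) > V(x₁ + c) implies U(x₂) ≥ V(x₂ + c). Suppose (U_n) and (V_n) are sequences in D, and U, V ∈ D, such that U_n(x) → U(x) at every continuity point x of U, and V_n(x) → V(x) at every continuity point x of V, and suppose U_n ≥_s V_n for all n. Then U ≥_s V. -/
import Mathlib


open Filter Topology

/-- Membership in `D`: `U : ℝ → ℝ` is a non-increasing right-continuous (càdlàg)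
function with values in `[0,1]`, tending to `1` at `−∞` and to `0` at `+∞`
(a complementary CDF of a probability measure on `ℝ`). -/
def IsCCDF (U : ℝ → ℝ) : Prop :=
  (∀ x, U x ∈ Set.Icc (0 : ℝ) 1) ∧ Antitone U ∧
  (∀ x, ContinuousWithinAt U (Set.Ici x) x) ∧
  Tendsto U atBot (𝓝 1) ∧ Tendsto U atTop (𝓝 0)

/-- `U` is more stretched than `V` (written `U ≥ₛ V`): for all `c ∈ ℝ` and `x₁ ≤ x₂`,
`U(x₁) > V(x₁ + c)` implies `U(x₂) ≥ V(x₂ + c)`. -/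
def MoreStretched (U V : ℝ → ℝ) : Prop :=
  ∀ c : ℝ, ∀ x₁ x₂ : ℝ, x₁ ≤ x₂ → V (x₁ + c) < U x₁ → V (x₂ + c) ≤ U x₂

/-- In any nonempty open interval we can find a point where `U` is continuous and `V` is
continuous at the point shifted by `c`. -/
lemma exists_good_point {U V : ℝ → ℝ} (hU : Antitone U) (hV : Antitone V) (c a b : ℝ)
    (hab : a < b) : ∃ y, a < y ∧ y < b ∧ ContinuousAt U y ∧ ContinuousAt V (y + c) := by
  set S : Set ℝ := {y | ¬ContinuousAt U y} ∪ (fun z => z - c) '' {z | ¬ContinuousAt V z}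
  have hS : S.Countable :=
    (hU.countable_not_continuousAt).union ((hV.countable_not_continuousAt).image _)
  have hdense : Dense Sᶜ := hS.dense_compl ℝ
  obtain ⟨y, hyS, hy1, hy2⟩ := hdense.exists_between hab
  refine ⟨y, hy1, hy2, ?_, ?_⟩
  · by_contra h
    exact hyS (Or.inl h)
  · by_contra h
    exact hyS (Or.inr ⟨y + c, h, by ring⟩)

/-- The stretching relation is preserved under limits in the topology `τ_D`
(pointwise convergence at all continuity points of the limit): if `Uₙ → U` and
`Vₙ → V` at every continuity point of `U` resp. `V`, with all functions in `D`,
and `Uₙ ≥ₛ Vₙ` for every `n`, then `U ≥ₛ V`. -/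
theorem moreStretched_of_tendsto
    (Un Vn : ℕ → ℝ → ℝ) (U V : ℝ → ℝ)
    (hUn : ∀ n, IsCCDF (Un n)) (hVn : ∀ n, IsCCDF (Vn n))
    (hU : IsCCDF U) (hV : IsCCDF V)
    (hUconv : ∀ x, ContinuousAt U x → Tendsto (fun n => Un n x) atTop (𝓝 (U x)))
    (hVconv : ∀ x, ContinuousAt V x → Tendsto (fun n => Vn n x) atTop (𝓝 (V x)))
    (hstretch : ∀ n, MoreStretched (Un n) (Vn n)) :
    MoreStretched U V := by
  intro c x₁ x₂ hle h₁
  by_contra h₂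
  push_neg at h₂
  -- shift map sends right neighborhoods to right neighborhoods
  have hshift : ∀ x : ℝ, Tendsto (fun y : ℝ => y + c) (𝓝[≥] x) (𝓝[≥] (x + c)) := by
    intro x
    apply tendsto_nhdsWithin_of_tendsto_nhds_of_eventually_within
    · exact (continuous_id.add continuous_const).continuousAt.tendsto.mono_left
        nhdsWithin_le_nhds
    · exact eventually_mem_nhdsWithin.mono (fun y hy => by
        simpa [Set.mem_Ici] using add_le_add_right (Set.mem_Ici.1 hy) c)
  have rcU₁ : Tendsto U (𝓝[≥] x₁) (𝓝 (U x₁)) := hU.2.2.1 x₁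
  have rcV₁ : Tendsto (fun y => V (y + c)) (𝓝[≥] x₁) (𝓝 (V (x₁ + c))) :=
    Filter.Tendsto.comp (hV.2.2.1 (x₁ + c)) (hshift x₁)
  have rcU₂ : Tendsto U (𝓝[≥] x₂) (𝓝 (U x₂)) := hU.2.2.1 x₂
  have rcV₂ : Tendsto (fun y => V (y + c)) (𝓝[≥] x₂) (𝓝 (V (x₂ + c))) :=
    Filter.Tendsto.comp (hV.2.2.1 (x₂ + c)) (hshift x₂)
  have hle₁ : (𝓝[>] x₁) ≤ (𝓝[≥] x₁) := nhdsWithin_mono x₁ Set.Ioi_subset_Ici_self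
  have hle₂ : (𝓝[>] x₂) ≤ (𝓝[≥] x₂) := nhdsWithin_mono x₂ Set.Ioi_subset_Ici_self
  have hev₁ : ∀ᶠ y in 𝓝[>] x₁, V (y + c) < U y :=
    (rcV₁.eventually_lt rcU₁ h₁).filter_mono hle₁
  have hev₂ : ∀ᶠ y in 𝓝[>] x₂, U y < V (y + c) :=
    (rcU₂.eventually_lt rcV₂ h₂).filter_mono hle₂
  obtain ⟨u₂, hu₂, hsub₂⟩ := mem_nhdsGT_iff_exists_Ioo_subset.1 hev₂
  obtain ⟨u₁, hu₁, hsub₁⟩ := mem_nhdsGT_iff_exists_Ioo_subset.1 hev₁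
  -- pick y₂ in (x₂, u₂), a good point
  obtain ⟨y₂, hy₂a, hy₂b, hcU₂, hcV₂⟩ :=
    exists_good_point hU.2.1 hV.2.1 c x₂ u₂ hu₂
  -- pick y₁ in (x₁, min u₁ y₂), a good point
  have hx₁lt : x₁ < min u₁ y₂ := lt_min hu₁ (lt_of_le_of_lt hle hy₂a)
  obtain ⟨y₁, hy₁a, hy₁b, hcU₁, hcV₁⟩ :=
    exists_good_point hU.2.1 hV.2.1 c x₁ (min u₁ y₂) hx₁lt
  have hy₁₂ : y₁ ≤ y₂ := le_of_lt (lt_of_lt_of_le hy₁b (min_le_right _ _))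
  have hV₁U₁ : V (y₁ + c) < U y₁ :=
    hsub₁ ⟨hy₁a, lt_of_lt_of_le hy₁b (min_le_left _ _)⟩
  have hU₂V₂ : U y₂ < V (y₂ + c) := hsub₂ ⟨hy₂a, hy₂b⟩
  -- pass to the sequences
  have hevn : ∀ᶠ n in atTop, Vn n (y₁ + c) < Un n y₁ :=
    (hVconv _ hcV₁).eventually_lt (hUconv _ hcU₁) hV₁U₁
  have hevn₂ : ∀ᶠ n in atTop, Vn n (y₂ + c) ≤ Un n y₂ :=
    hevn.mono (fun n hn => hstretch n c y₁ y₂ hy₁₂ hn)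
  have : V (y₂ + c) ≤ U y₂ :=
    le_of_tendsto_of_tendsto (hVconv _ hcV₂) (hUconv _ hcU₂) hevn₂
  exact absurd this (not_le.2 hU₂V₂)
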